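/- Let V be a finite-dimensional real vector space with a nondegenerate symmetric bilinear form of neutral signature (n, n), and let P : V → V be an isometric involution. If there exists a linear isometry R : V → V with P R = −R P, then the restriction of the bilinear form to each eigenspace E¹ = ker(P − Id) and E⁻¹ = ker(P + Id) is nondegenerate and of neutral signature. -/

import Mathlib

/-- A real bilinear form is *neutral* (signature `(n, n)`) if it admits an orthonormal-type
basis indexed by `Fin n ⊕ Fin n`, on which the form is diagonal with `n` entries `+1` and
`n` entries `-1`. -/
def IsNeutral {V : Type*} [AddCommGroup V] [Module ℝ V]
    (B : LinearMap.BilinForm ℝ V) : Prop :=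
  ∃ (n : ℕ) (b : Module.Basis (Fin n ⊕ Fin n) ℝ V),
    ∀ i j, B (b i) (b j) =
      if i = j then Sum.elim (fun _ => (1 : ℝ)) (fun _ => -1) i else 0

/-- The restriction of a bilinear form to a submodule. -/
def restrictForm {V : Type*} [AddCommGroup V] [Module ℝ V]
    (B : LinearMap.BilinForm ℝ V) (W : Submodule ℝ V) : LinearMap.BilinForm ℝ W :=
  B.compl₁₂ W.subtype W.subtype

section Aux

open Module Finset

variable {V : Type*} [AddCommGroup V] [Module ℝ V] [FiniteDimensional ℝ V]

lemma restrictForm_apply (B : LinearMap.BilinForm ℝ V) (W : Submodule ℝ V) (x y : W) :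
    restrictForm B W x y = B (x : V) (y : V) := rfl

lemma bilin_diag (B : LinearMap.BilinForm ℝ V) {κ : Type*} [Fintype κ]
    (v : κ → V) (hv : ∀ i j, i ≠ j → B (v i) (v j) = 0) (c : κ → ℝ) :
    B (∑ i, c i • v i) (∑ j, c j • v j) = ∑ i, c i ^ 2 * B (v i) (v i) := by
  have h1 : B (∑ i, c i • v i) = ∑ i, c i • B (v i) := by
    rw [map_sum]; simp only [map_smul]
  rw [h1, LinearMap.sum_apply]
  refine Finset.sum_congr rfl fun i _ => ?_
  rw [LinearMap.smul_apply, map_sum, Finset.sum_eq_single i]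
  · rw [map_smul]; simp only [smul_eq_mul]; ring
  · intro j _ hj; rw [map_smul, hv i j (Ne.symm hj)]; simp
  · simp

/-- Positive definiteness on the span of an orthogonal family of positive vectors. -/
lemma posdef_span (B : LinearMap.BilinForm ℝ V) {κ : Type*} [Fintype κ]
    (v : κ → V) (hvo : ∀ i j, i ≠ j → B (v i) (v j) = 0)
    (hvpos : ∀ i, 0 < B (v i) (v i)) :
    ∀ w ∈ Submodule.span ℝ (Set.range v), w ≠ 0 → 0 < B w w := by
  intro w hw hw0
  obtain ⟨c, rfl⟩ := Submodule.mem_span_range_iff_exists_fun ℝ |>.mp hw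
  rw [bilin_diag B v hvo c]
  have hex : ∃ i, c i ≠ 0 := by
    by_contra h
    push_neg at h
    exact hw0 (by simp [h])
  obtain ⟨i, hi⟩ := hex
  refine Finset.sum_pos' (fun j _ => mul_nonneg (sq_nonneg _) (hvpos j).le) ⟨i, Finset.mem_univ i, ?_⟩
  have h2 : 0 < c i ^ 2 := by positivity
  exact mul_pos h2 (hvpos i)

/-- The inertia lemma: a positive-definite subspace has dimension at most the
number of positive diagonal entries of an orthogonal basis. -/
lemma finrank_le_card_pos (B : LinearMap.BilinForm ℝ V)
    {ι : Type*} [Fintype ι] [DecidableEq ι] (b : Basis ι ℝ V)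
    (hb : ∀ i j, i ≠ j → B (b i) (b j) = 0)
    (W : Submodule ℝ V) (hW : ∀ w ∈ W, w ≠ 0 → 0 < B w w) :
    finrank ℝ W ≤ (Finset.univ.filter (fun i => 0 < B (b i) (b i))).card := by
  classical
  set S := Finset.univ.filter (fun i => 0 < B (b i) (b i)) with hS
  set N : Submodule ℝ V := Submodule.span ℝ (Set.range (fun i : {i // i ∉ S} => b i)) with hN
  have hNneg : ∀ v ∈ N, B v v ≤ 0 := by
    intro v hv
    obtain ⟨c, rfl⟩ := Submodule.mem_span_range_iff_exists_fun ℝ |>.mp hv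
    rw [bilin_diag B _ (fun i j hij => hb i.1 j.1 (fun h => hij (Subtype.ext h))) c]
    refine Finset.sum_nonpos fun i _ => ?_
    have hi : B (b i.1) (b i.1) ≤ 0 := by
      have := i.2
      simp [hS] at this
      exact this
    nlinarith [sq_nonneg (c i)]
  have hdisj : W ⊓ N = ⊥ := by
    rw [Submodule.eq_bot_iff]
    rintro x ⟨hxW, hxN⟩
    by_contra hx
    exact absurd (hNneg x hxN) (not_le.mpr (hW x hxW hx))
  have hliN : LinearIndependent ℝ (fun i : {i // i ∉ S} => b i) :=
    b.linearIndependent.comp _ Subtype.coe_injective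
  have hNrank : finrank ℝ N = Fintype.card {i // i ∉ S} := finrank_span_eq_card hliN
  have hcard : Fintype.card {i // i ∉ S} = Fintype.card ι - S.card := by
    rw [Fintype.card_subtype_compl]
    simp [Fintype.card_coe]
  have hsum := Submodule.finrank_sup_add_finrank_inf_eq W N
  rw [hdisj] at hsum
  have hle : finrank ℝ ↥(W ⊔ N) ≤ finrank ℝ V := Submodule.finrank_le _
  have hVc : finrank ℝ V = Fintype.card ι := finrank_eq_card_basis b
  have hSle : S.card ≤ Fintype.card ι := by
    simpa using Finset.card_le_card (Finset.subset_univ S)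
  simp [finrank_bot] at hsum
  omega

/-- Existence of an orthogonal basis with `±1` diagonal for a nondegenerate symmetric form. -/
lemma exists_pm_one_basis (B : LinearMap.BilinForm ℝ V) (hs : ∀ x y : V, B x y = B y x)
    (hnd : B.Nondegenerate) :
    ∃ u : Basis (Fin (finrank ℝ V)) ℝ V, (∀ i j, i ≠ j → B (u i) (u j) = 0) ∧
      ∀ i, B (u i) (u i) = 1 ∨ B (u i) (u i) = -1 := by
  have hsymm : LinearMap.IsSymm B := ⟨fun x y => hs x y⟩
  obtain ⟨v, hv⟩ := LinearMap.BilinForm.exists_orthogonal_basis hsymm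
  have hnz : ∀ i, B (v i) (v i) ≠ 0 := fun i =>
    hv.not_isOrtho_basis_self_of_separatingLeft hnd.1 i
  have hpos : ∀ i, (0:ℝ) < Real.sqrt |B (v i) (v i)| := fun i => by
    have := hnz i
    have h1 : (0:ℝ) < |B (v i) (v i)| := abs_pos.mpr this
    positivity
  set w : Fin (finrank ℝ V) → ℝˣ :=
    fun i => Units.mk0 (1 / Real.sqrt |B (v i) (v i)|) (by have := hpos i; positivity) with hw
  refine ⟨v.unitsSMul w, ?_, ?_⟩
  · intro i j hij
    have h0 : B (v i) (v j) = 0 := hv hij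
    rw [Basis.unitsSMul_apply, Basis.unitsSMul_apply, Units.smul_def, Units.smul_def]
    simp [h0]
  · intro i
    set c := B (v i) (v i) with hc
    have hval : B ((v.unitsSMul w) i) ((v.unitsSMul w) i) = c / |c| := by
      have hsq : Real.sqrt |c| * Real.sqrt |c| = |c| := Real.mul_self_sqrt (abs_nonneg _)
      rw [Basis.unitsSMul_apply, Units.smul_def]
      simp only [map_smul, LinearMap.smul_apply, smul_eq_mul]
      simp only [hw, Units.val_mk0, one_div]
      rw [← mul_assoc, ← mul_inv, hsq, inv_mul_eq_div]
    rw [hval]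
    rcases lt_or_gt_of_ne (hnz i) with h | h
    · right; rw [abs_of_neg h, div_neg, div_self h.ne]
    · left; rw [abs_of_pos h, div_self h.ne']

/-- Key inequality: twice the size of an orthogonal positive family inside `E1`
is at most the number of positive diagonal entries of an orthogonal basis of `V`,
given an injective isometry carrying `E1` into `E2` with `E1 ⊥ E2`, `E1 ⊓ E2 = ⊥`. -/
lemma key_le (B : LinearMap.BilinForm ℝ V) (hBsymm : ∀ x y : V, B x y = B y x)
    {ι : Type*} [Fintype ι] [DecidableEq ι] (b : Basis ι ℝ V)
    (hbo : ∀ i j, i ≠ j → B (b i) (b j) = 0)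
    (E1 E2 : Submodule ℝ V)
    (horth : ∀ x ∈ E1, ∀ y ∈ E2, B x y = 0)
    (hinf : E1 ⊓ E2 = ⊥)
    {κ : Type*} [Fintype κ] (v : κ → V) (hvE1 : ∀ k, v k ∈ E1)
    (hli : LinearIndependent ℝ v)
    (hvo : ∀ k l, k ≠ l → B (v k) (v l) = 0) (hvpos : ∀ k, 0 < B (v k) (v k))
    (R : V →ₗ[ℝ] V) (hRinj : Function.Injective R)
    (hRiso : ∀ x y : V, B (R x) (R y) = B x y)
    (hRmap : ∀ x ∈ E1, R x ∈ E2) :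
    2 * Fintype.card κ ≤ (Finset.univ.filter (fun i => 0 < B (b i) (b i))).card := by
  classical
  set W1 : Submodule ℝ V := Submodule.span ℝ (Set.range v) with hW1def
  have hW1E1 : W1 ≤ E1 := by
    rw [hW1def, Submodule.span_le]
    rintro _ ⟨k, rfl⟩
    exact hvE1 k
  have hW1pos := posdef_span B v hvo hvpos
  set W2 : Submodule ℝ V := Submodule.map R W1 with hW2def
  have hW2E2 : W2 ≤ E2 := by
    rintro _ ⟨a, ha, rfl⟩
    exact hRmap a (hW1E1 ha)
  have hW2pos : ∀ w ∈ W2, w ≠ 0 → 0 < B w w := by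
    rintro _ ⟨a, ha, rfl⟩ hw0
    have ha0 : a ≠ 0 := fun h => hw0 (by simp [h])
    rw [hRiso]
    exact hW1pos a ha ha0
  have hr1 : finrank ℝ W1 = Fintype.card κ := finrank_span_eq_card hli
  have hr2 : finrank ℝ W2 = Fintype.card κ := by
    rw [← hr1]
    exact (LinearEquiv.finrank_eq (Submodule.equivMapOfInjective R hRinj W1)).symm
  have hdisj : W1 ⊓ W2 = ⊥ := by
    rw [Submodule.eq_bot_iff]
    intro x hx
    have : x ∈ E1 ⊓ E2 := ⟨hW1E1 hx.1, hW2E2 hx.2⟩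
    rwa [hinf, Submodule.mem_bot] at this
  have hsuppos : ∀ w ∈ W1 ⊔ W2, w ≠ 0 → 0 < B w w := by
    intro w hw hw0
    obtain ⟨a, ha, c, hc, rfl⟩ := Submodule.mem_sup.mp hw
    have hac : B a c = 0 := horth a (hW1E1 ha) c (hW2E2 hc)
    have hca : B c a = 0 := by rw [hBsymm]; exact hac
    have hBsum : B (a + c) (a + c) = B a a + B c c := by
      simp only [map_add, LinearMap.add_apply, hac, hca]
      ring
    rw [hBsum]
    rcases eq_or_ne a 0 with rfl | ha0
    · have hc0 : c ≠ 0 := fun h => hw0 (by simp [h])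
      have := hW2pos c hc hc0
      simp only [map_zero, LinearMap.zero_apply, zero_add]
      exact this
    · have h1 := hW1pos a ha ha0
      rcases eq_or_ne c 0 with rfl | hc0
      · simpa using h1
      · have h2 := hW2pos c hc hc0
        linarith
  have hsumrank := Submodule.finrank_sup_add_finrank_inf_eq W1 W2
  rw [hdisj] at hsumrank
  simp [finrank_bot] at hsumrank
  have := finrank_le_card_pos B b hbo (W1 ⊔ W2) hsuppos
  omega

/-- The main auxiliary theorem, for the `+1`-eigenspace only. -/
theorem aux_main (B : LinearMap.BilinForm ℝ V)
    (hBsymm : ∀ x y : V, B x y = B y x)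
    (hBneutral : IsNeutral B)
    (P : V →ₗ[ℝ] V) (hP : P ∘ₗ P = LinearMap.id)
    (hPiso : ∀ x y : V, B (P x) (P y) = B x y)
    (R : V →ₗ[ℝ] V) (hRiso : ∀ x y : V, B (R x) (R y) = B x y)
    (hPR : P ∘ₗ R = -(R ∘ₗ P)) :
    (restrictForm B (LinearMap.ker (P - LinearMap.id))).Nondegenerate ∧
      IsNeutral (restrictForm B (LinearMap.ker (P - LinearMap.id))) := by
  classical
  obtain ⟨n, bV, hbV⟩ := hBneutral
  have hdV : ∀ i, B (bV i) (bV i) = Sum.elim (fun _ => (1:ℝ)) (fun _ => -1) i := by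
    intro i; simpa using hbV i i
  have hbVo : ∀ i j, i ≠ j → B (bV i) (bV j) = 0 := by
    intro i j hij; rw [hbV i j, if_neg hij]
  -- nondegeneracy of B
  have hBnd : B.SeparatingLeft := by
    refine LinearMap.IsOrthoᵢ.separatingLeft_of_not_isOrtho_basis_self bV (fun i j hij => hbVo i j hij) (fun i => ?_)
    intro h
    rw [hdV i] at h
    rcases i with i | i <;> simp at h <;> linarith
  set E1 := LinearMap.ker (P - LinearMap.id) with hE1def
  set E2 := LinearMap.ker (P + LinearMap.id) with hE2def
  have hPP : ∀ x : V, P (P x) = x := fun x => by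
    have := LinearMap.ext_iff.mp hP x
    simpa using this
  have hE1mem : ∀ x : V, x ∈ E1 ↔ P x = x := fun x => by
    rw [hE1def, LinearMap.mem_ker, LinearMap.sub_apply, LinearMap.id_apply, sub_eq_zero]
  have hE2mem : ∀ x : V, x ∈ E2 ↔ P x = -x := fun x => by
    rw [hE2def, LinearMap.mem_ker, LinearMap.add_apply, LinearMap.id_apply,
      add_eq_zero_iff_eq_neg]
  have horth : ∀ x ∈ E1, ∀ y ∈ E2, B x y = 0 := by
    intro x hx y hy
    have h := hPiso x y
    rw [(hE1mem x).mp hx, (hE2mem y).mp hy, map_neg] at h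
    linarith
  have hinf : E1 ⊓ E2 = ⊥ := by
    rw [Submodule.eq_bot_iff]
    rintro x ⟨hx1, hx2⟩
    have h1 := (hE1mem x).mp hx1
    have h2 := (hE2mem x).mp hx2
    rw [h1] at h2
    have h4 : (2:ℝ) • x = 0 := by
      rw [two_smul]
      nth_rewrite 1 [h2]
      exact neg_add_cancel x
    rcases smul_eq_zero.mp h4 with h | h
    · norm_num at h
    · exact h
  have hsup : E1 ⊔ E2 = ⊤ := by
    rw [eq_top_iff]
    intro v _
    have hv : v = (2⁻¹ : ℝ) • (v + P v) + (2⁻¹ : ℝ) • (v - P v) := by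
      match_scalars <;> ring
    rw [hv]
    refine Submodule.add_mem _ (Submodule.mem_sup_left ?_) (Submodule.mem_sup_right ?_)
    · rw [hE1mem]
      rw [map_smul, map_add, hPP]
      rw [add_comm (P v) v]
    · rw [hE2mem]
      rw [map_smul, map_sub, hPP]
      module
  -- nondegeneracy of the restriction
  have hndE1 : (restrictForm B E1).Nondegenerate := by
    refine (LinearMap.IsSymm.isRefl (⟨fun x y => hBsymm _ _⟩ : LinearMap.IsSymm (restrictForm B E1))).nondegenerate_iff_separatingLeft.mpr ?_
    intro x hx
    have hall : ∀ w : V, B (x : V) w = 0 := by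
      intro w
      have hw : w ∈ E1 ⊔ E2 := by rw [hsup]; trivial
      obtain ⟨a, ha, c, hc, rfl⟩ := Submodule.mem_sup.mp hw
      have h1 : B (x : V) a = 0 := hx ⟨a, ha⟩
      have h2 : B (x : V) c = 0 := horth _ x.2 _ hc
      rw [map_add, h1, h2, add_zero]
    exact Subtype.ext (hBnd (x : V) hall)
  refine ⟨hndE1, ?_⟩
  -- symmetry of the restriction
  have hsymmE1 : ∀ x y : E1, restrictForm B E1 x y = restrictForm B E1 y x := by
    intro x y; exact hBsymm _ _
  -- properties of R
  have hRinj : Function.Injective R := by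
    rw [← LinearMap.ker_eq_bot]
    rw [Submodule.eq_bot_iff]
    intro x hx
    rw [LinearMap.mem_ker] at hx
    refine hBnd x fun w => ?_
    have := hRiso x w
    rw [hx] at this
    simp at this
    exact this.symm
  have hPRx : ∀ x : V, P (R x) = -(R (P x)) := by
    intro x
    have := LinearMap.ext_iff.mp hPR x
    simpa using this
  have hRmap12 : ∀ x ∈ E1, R x ∈ E2 := by
    intro x hx
    rw [hE2mem, hPRx, (hE1mem x).mp hx]
  have hRmap21 : ∀ x ∈ E2, R x ∈ E1 := by
    intro x hx
    rw [hE1mem, hPRx, (hE2mem x).mp hx]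
    simp
  -- dimensions
  have hdim12 : finrank ℝ E1 = finrank ℝ E2 := by
    have h1 : finrank ℝ E1 ≤ finrank ℝ E2 := by
      calc finrank ℝ E1 = finrank ℝ (Submodule.map R E1) :=
            (LinearEquiv.finrank_eq (Submodule.equivMapOfInjective R hRinj E1))
        _ ≤ finrank ℝ E2 := Submodule.finrank_mono (by rintro _ ⟨a, ha, rfl⟩; exact hRmap12 a ha)
    have h2 : finrank ℝ E2 ≤ finrank ℝ E1 := by
      calc finrank ℝ E2 = finrank ℝ (Submodule.map R E2) :=
            (LinearEquiv.finrank_eq (Submodule.equivMapOfInjective R hRinj E2))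
        _ ≤ finrank ℝ E1 := Submodule.finrank_mono (by rintro _ ⟨a, ha, rfl⟩; exact hRmap21 a ha)
    omega
  have hVfr : finrank ℝ V = 2 * n := by
    rw [finrank_eq_card_basis bV]
    simp [Fintype.card_sum]
    ring
  have hsumdim : finrank ℝ E1 + finrank ℝ E2 = 2 * n := by
    have := Submodule.finrank_sup_add_finrank_inf_eq E1 E2
    rw [hsup, hinf] at this
    rw [finrank_top, finrank_bot, add_zero] at this
    omega
  have hE1n : finrank ℝ E1 = n := by omega
  -- orthogonal ±1 basis of E1
  set B' := restrictForm B E1 with hB'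
  obtain ⟨u, huo, hud⟩ := exists_pm_one_basis B' hsymmE1 hndE1
  set S : Finset (Fin (finrank ℝ E1)) := Finset.univ.filter (fun i => B' (u i) (u i) = 1) with hSdef
  set T : Finset (Fin (finrank ℝ E1)) := Finset.univ.filter (fun i => B' (u i) (u i) = -1) with hTdef
  have hST : ∀ i, i ∈ T ↔ i ∉ S := by
    intro i
    simp only [hSdef, hTdef, Finset.mem_filter, Finset.mem_univ, true_and]
    rcases hud i with h | h <;> rw [h] <;> norm_num
  have hSTcard : S.card + T.card = finrank ℝ E1 := by
    have : T = Sᶜ := by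
      ext i; rw [hST i, Finset.mem_compl]
    rw [this, Finset.card_compl, Fintype.card_fin]
    have hle2 : S.card ≤ finrank ℝ E1 := by
      have := Finset.card_le_univ S
      rwa [Fintype.card_fin] at this
    omega
  -- the coercions of u to V
  have huV : ∀ i j, i ≠ j → B ((u i : V)) ((u j : V)) = 0 := fun i j hij => huo i j hij
  have hudV : ∀ i, B ((u i : V)) ((u i : V)) = B' (u i) (u i) := fun i => rfl
  have huliV : LinearIndependent ℝ (fun i => ((u i : V))) := by
    exact LinearIndependent.map' u.linearIndependent E1.subtype (Submodule.ker_subtype E1)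
  -- cardinal of positive entries of bV for B and for -B
  have hposcard : (Finset.univ.filter (fun i : Fin n ⊕ Fin n => 0 < B (bV i) (bV i))).card = n := by
    have heq : (Finset.univ.filter (fun i : Fin n ⊕ Fin n => 0 < B (bV i) (bV i)))
        = Finset.univ.image Sum.inl := by
      ext i
      rcases i with i | i <;> simp [hdV]
    rw [heq, Finset.card_image_of_injective _ Sum.inl_injective, Finset.card_univ,
      Fintype.card_fin]
  have hnegcard : (Finset.univ.filter (fun i : Fin n ⊕ Fin n => 0 < (-B) (bV i) (bV i))).card = n := by
    have heq : (Finset.univ.filter (fun i : Fin n ⊕ Fin n => 0 < (-B) (bV i) (bV i)))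
        = Finset.univ.image Sum.inr := by
      ext i
      rcases i with i | i <;> simp [hdV]
    rw [heq, Finset.card_image_of_injective _ Sum.inr_injective, Finset.card_univ,
      Fintype.card_fin]
  -- 2 * S.card ≤ n
  have hSle : 2 * S.card ≤ n := by
    have := key_le B hBsymm bV hbVo E1 E2 horth hinf
      (fun i : {i // i ∈ S} => ((u i.1 : V)))
      (fun k => (u k.1).2)
      (huliV.comp _ Subtype.coe_injective)
      (fun k l hkl => huV k.1 l.1 (fun h => hkl (Subtype.ext h)))
      (fun k => by
        have h1 : B ((u k.1 : V)) ((u k.1 : V)) = 1 := (Finset.mem_filter.mp k.2).2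
        rw [h1]; norm_num)
      R hRinj hRiso hRmap12
    rw [hposcard] at this
    simpa [Fintype.card_coe] using this
  have hTle : 2 * T.card ≤ n := by
    have := key_le (-B) (fun x y => by simp [hBsymm x y]) bV
      (fun i j hij => by simp [hbVo i j hij]) E1 E2
      (fun x hx y hy => by simp [horth x hx y hy]) hinf
      (fun i : {i // i ∈ T} => ((u i.1 : V)))
      (fun k => (u k.1).2)
      (huliV.comp _ Subtype.coe_injective)
      (fun k l hkl => by simp [huV k.1 l.1 (fun h => hkl (Subtype.ext h))])
      (fun k => by
        have h1 : B ((u k.1 : V)) ((u k.1 : V)) = -1 := (Finset.mem_filter.mp k.2).2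
        simp only [LinearMap.neg_apply, h1]
        norm_num)
      R hRinj (fun x y => by simp [hRiso x y]) hRmap12
    rw [hnegcard] at this
    simpa [Fintype.card_coe] using this
  have hpq : S.card = T.card := by
    have h1 := hSle
    have h2 := hTle
    have h3 := hSTcard
    omega
  set p := S.card with hp
  -- build the reindexed basis
  have hTcard : T.card = p := hpq.symm
  have e1 : Fin p ≃ {i // i ∈ S} := (Finset.equivFin S).symm
  have e2 : Fin p ≃ {i // i ∈ T} := (finCongr hTcard.symm).trans (Finset.equivFin T).symm
  set e : (Fin p ⊕ Fin p) ≃ Fin (finrank ℝ E1) :=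
    (Equiv.sumCongr e1 (e2.trans
      ⟨fun x => ⟨x.1, (hST x.1).mp x.2⟩, fun x => ⟨x.1, (hST x.1).mpr x.2⟩,
       fun x => rfl, fun x => rfl⟩)).trans (Equiv.sumCompl (fun i => i ∈ S)) with hedef
  have heS : ∀ k : Fin p, B' (u (e (Sum.inl k))) (u (e (Sum.inl k))) = 1 := by
    intro k
    have h0 : e (Sum.inl k) = (e1 k).1 := rfl
    rw [h0]
    exact (Finset.mem_filter.mp (e1 k).2).2
  have heT : ∀ k : Fin p, B' (u (e (Sum.inr k))) (u (e (Sum.inr k))) = -1 := by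
    intro k
    have h0 : e (Sum.inr k) = (e2 k).1 := rfl
    rw [h0]
    exact (Finset.mem_filter.mp (e2 k).2).2
  refine ⟨p, u.reindex e.symm, ?_⟩
  intro i j
  rw [Basis.reindex_apply, Basis.reindex_apply, Equiv.symm_symm]
  by_cases hij : i = j
  · subst hij
    rw [if_pos rfl]
    rcases i with k | k
    · simpa using heS k
    · simpa using heT k
  · rw [if_neg hij]
    exact huo (e i) (e j) (fun h => hij (e.injective h))

end Aux

theorem eigenspaces_neutral_of_anticommuting_isometry
    {V : Type*} [AddCommGroup V] [Module ℝ V] [FiniteDimensional ℝ V]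
    (B : LinearMap.BilinForm ℝ V)
    (hBsymm : ∀ x y : V, B x y = B y x)
    (hBneutral : IsNeutral B)
    (P : V →ₗ[ℝ] V) (hP : P ∘ₗ P = LinearMap.id)
    (hPiso : ∀ x y : V, B (P x) (P y) = B x y)
    (R : V →ₗ[ℝ] V) (hRiso : ∀ x y : V, B (R x) (R y) = B x y)
    (hPR : P ∘ₗ R = -(R ∘ₗ P)) :
    ((restrictForm B (LinearMap.ker (P - LinearMap.id))).Nondegenerate ∧
      IsNeutral (restrictForm B (LinearMap.ker (P - LinearMap.id)))) ∧
    ((restrictForm B (LinearMap.ker (P + LinearMap.id))).Nondegenerate ∧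
      IsNeutral (restrictForm B (LinearMap.ker (P + LinearMap.id)))) := by
  refine ⟨aux_main B hBsymm hBneutral P hP hPiso R hRiso hPR, ?_⟩
  have hker : LinearMap.ker ((-P) - LinearMap.id) = LinearMap.ker (P + LinearMap.id) := by
    ext x
    simp only [LinearMap.mem_ker, LinearMap.sub_apply, LinearMap.add_apply,
      LinearMap.neg_apply, LinearMap.id_apply]
    have hx : -P x - x = -(P x + x) := by abel
    rw [hx, neg_eq_zero]
  have := aux_main B hBsymm hBneutral (-P)
    (by rw [LinearMap.neg_comp, LinearMap.comp_neg, neg_neg]; exact hP)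
    (fun x y => by simpa using hPiso x y)
    R hRiso
    (by rw [LinearMap.neg_comp, LinearMap.comp_neg, hPR, neg_neg])
  rw [hker] at this
  exact this
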